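/- Let p be a prime and let G be a finite non-abelian p-group that is (p + 2)-centralizer, i.e., the set {C_G(x) : x ∈ G} of centralizers of elements of G has exactly p + 2 members. Then the characteristic polynomial of the adjacency matrix of the commuting graph Γ_G (over the reals) equals (X + 1)^((p² − 1)·|Z(G)| − p − 1) · (X − ((p − 1)·|Z(G)| − 1))^(p + 1); in particular G is commuting integral. -/

import Mathlib

open Polynomial

/-- The commuting graph of a group `G`: vertices are the non-central elements,
two distinct vertices are adjacent iff they commute. -/
def commutingGraph (G : Type*) [Group G] : SimpleGraph {x : G // x ∉ Subgroup.center G} where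
  Adj x y := x ≠ y ∧ (x : G) * y = (y : G) * x
  symm := ⟨by rintro x y ⟨hne, hc⟩; exact ⟨hne.symm, hc.symm⟩⟩
  loopless := ⟨by rintro x ⟨hne, _⟩; exact hne rfl⟩

open scoped Classical in
/-- The characteristic polynomial (over `ℝ`) of the adjacency matrix of the
commuting graph of `G`. -/
noncomputable def commCharpoly (G : Type*) [Group G] [Fintype G] : Polynomial ℝ :=
  ((commutingGraph G).adjMatrix ℝ).charpoly

section MatrixAux
open Matrix in

lemma charpoly_fiber_matrix {V K : Type*} [Fintype V] [DecidableEq V] [Fintype K] [DecidableEq K]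
    (f : V → K) (n : ℕ) (hn : 1 ≤ n) (hfib : ∀ k : K, Fintype.card {v : V // f v = k} = n)
    (A : Matrix V V ℝ) (hA : ∀ v w, A v w = if v ≠ w ∧ f v = f w then 1 else 0) :
    A.charpoly =
      (X + 1) ^ (Fintype.card V - Fintype.card K) * (X - C ((n : ℝ) - 1)) ^ Fintype.card K := by
  classical
  have hN : Fintype.card V = Fintype.card K * n := by
    calc Fintype.card V = Fintype.card (Σ k : K, {v : V // f v = k}) :=
          (Fintype.card_congr (Equiv.sigmaFiberEquiv f)).symm
    _ = ∑ k : K, Fintype.card {v : V // f v = k} := Fintype.card_sigma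
    _ = Fintype.card K * n := by simp [hfib, Finset.sum_const, mul_comm]
  set U : Matrix V K ℝ := Matrix.of (fun v k => if f v = k then 1 else 0) with hU
  have hUU : ∀ v w, (U * Uᵀ) v w = if f v = f w then 1 else 0 := by
    intro v w
    simp only [Matrix.mul_apply, Matrix.transpose_apply, hU, Matrix.of_apply]
    rw [Finset.sum_eq_single (f v)]
    · simp [eq_comm]
    · intro k _ hk; simp [Ne.symm hk]
    · simp
  have hAU : A = U * Uᵀ - 1 := by
    ext v w
    rw [hA, Matrix.sub_apply, hUU, Matrix.one_apply]
    by_cases hvw : v = w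
    · subst hvw; simp
    · simp [hvw]
  have hUtU : Uᵀ * U = (n : ℝ) • 1 := by
    ext k l
    simp only [Matrix.mul_apply, Matrix.transpose_apply, hU, Matrix.of_apply, Matrix.smul_apply,
      Matrix.one_apply]
    by_cases hkl : k = l
    · subst hkl
      have h1 : ∀ v : V, (if f v = k then (1:ℝ) else 0) * (if f v = k then 1 else 0)
          = if f v = k then 1 else 0 := fun v => by by_cases h : f v = k <;> simp [h]
      simp only [h1]
      rw [Finset.sum_boole]
      simp [← Fintype.card_subtype, hfib]
    · have h1 : ∀ v : V, (if f v = k then (1:ℝ) else 0) * (if f v = l then 1 else 0) = 0 := by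
        intro v
        by_cases h : f v = k
        · have : f v ≠ l := h ▸ hkl
          simp [this]
        · simp [h]
      rw [Finset.sum_eq_zero (fun v _ => h1 v)]
      simp [hkl]
  -- move to the fraction field
  set F := FractionRing (Polynomial ℝ) with hF
  set φ : Polynomial ℝ →+* F := algebraMap (Polynomial ℝ) F with hφ
  have hinj : Function.Injective φ := IsFractionRing.injective _ _
  set ψ : ℝ →+* F := φ.comp (Polynomial.C : ℝ →+* Polynomial ℝ) with hψ
  set B : Matrix V K F := U.map ψ with hB
  set l : F := φ (X + 1) with hl
  have hX1 : (X + 1 : Polynomial ℝ) ≠ 0 := by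
    intro h
    have := congrArg (fun q => Polynomial.coeff q 1) h
    simp [Polynomial.coeff_one] at this
  have hl0 : l ≠ 0 := by
    intro h
    exact hX1 (hinj (by rw [map_zero, ← hl]; exact h))
  have hchar : charmatrix A = (X + 1 : Polynomial ℝ) • 1 - (U * Uᵀ).map Polynomial.C := by
    refine Matrix.ext fun i j => ?_
    rw [charmatrix_apply, Matrix.sub_apply, Matrix.smul_apply, Matrix.map_apply]
    have hAij : A i j = (U * Uᵀ) i j - (if i = j then 1 else 0) := by
      rw [hAU, Matrix.sub_apply, Matrix.one_apply]
    rw [hAij]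
    by_cases hij : i = j
    · subst hij
      simp only [Matrix.diagonal_apply_eq, Matrix.one_apply_eq, if_pos rfl, map_sub,
        eq_self_iff_true, if_true, Polynomial.C_1, smul_eq_mul, mul_one]
      ring
    · simp only [Matrix.diagonal_apply_ne _ hij, Matrix.one_apply_ne hij, if_neg hij, sub_zero,
        smul_eq_mul, mul_zero]
  have hmap : (charmatrix A).map φ = l • (1 : Matrix V V F) - B * Bᵀ := by
    have hBB : B * Bᵀ = (U * Uᵀ).map ψ := by
      rw [hB, ← Matrix.transpose_map, ← Matrix.map_mul]
    rw [hchar, hBB]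
    refine Matrix.ext fun i j => ?_
    simp only [Matrix.map_apply, Matrix.sub_apply, Matrix.smul_apply, Matrix.one_apply,
      smul_eq_mul, map_sub, hψ, RingHom.comp_apply]
    congr 1
    rw [mul_ite, mul_one, mul_zero, apply_ite φ, map_zero, mul_ite, mul_one, mul_zero]
  have hBtB : Bᵀ * B = (n : F) • (1 : Matrix K K F) := by
    calc Bᵀ * B = (Uᵀ.map ψ) * (U.map ψ) := by rw [hB, Matrix.transpose_map]
    _ = (Uᵀ * U).map ⇑ψ := Matrix.map_mul.symm
    _ = (((n : ℝ) • (1 : Matrix K K ℝ)).map ⇑ψ) := by rw [hUtU]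
    _ = (n : F) • 1 := by
      refine Matrix.ext fun i j => ?_
      by_cases h : i = j <;>
        simp [h, Matrix.map_apply, Matrix.smul_apply, Matrix.one_apply, mul_ite, mul_one,
          mul_zero, map_natCast]
  set N := Fintype.card V with hNdef
  set κ := Fintype.card K with hκdef
  have hNκ : κ ≤ N := by rw [hN]; exact Nat.le_mul_of_pos_right _ hn
  have hdet1 : φ A.charpoly = ((charmatrix A).map φ).det := by
    rw [show A.charpoly = (charmatrix A).det from rfl, RingHom.map_det, RingHom.mapMatrix_apply]
  have hdet2 : ((charmatrix A).map φ).det = l ^ (N - κ) * (l - n) ^ κ := by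
    rw [hmap]
    have e1 : l • (1 : Matrix V V F) - B * Bᵀ = l • ((1 : Matrix V V F) - (l⁻¹ • B) * Bᵀ) := by
      rw [smul_sub, Matrix.smul_mul, smul_smul, mul_inv_cancel₀ hl0, one_smul]
    rw [e1, Matrix.det_smul, Matrix.det_one_sub_mul_comm]
    have e2 : Bᵀ * (l⁻¹ • B) = (l⁻¹ * n) • (1 : Matrix K K F) := by
      rw [Matrix.mul_smul, hBtB, smul_smul]
    have e3 : (1 : Matrix K K F) - (l⁻¹ * n) • 1 = (1 - l⁻¹ * n) • (1 : Matrix K K F) := by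
      rw [sub_smul, one_smul]
    rw [e2, e3, Matrix.det_smul, Matrix.det_one, mul_one]
    have e4 : l * (1 - l⁻¹ * n) = l - n := by
      rw [mul_sub, mul_one, ← mul_assoc, mul_inv_cancel₀ hl0, one_mul]
    calc l ^ N * (1 - l⁻¹ * n) ^ κ = l ^ (N - κ) * (l ^ κ * (1 - l⁻¹ * n) ^ κ) := by
          rw [← mul_assoc, ← pow_add, Nat.sub_add_cancel hNκ]
    _ = l ^ (N - κ) * (l - n) ^ κ := by rw [← mul_pow, e4]
  have hrhs : φ ((X + 1) ^ (N - κ) * (X - C ((n : ℝ) - 1)) ^ κ) = l ^ (N - κ) * (l - n) ^ κ := by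
    rw [_root_.map_mul, _root_.map_pow, _root_.map_pow]
    have h5 : (X - C ((n : ℝ) - 1) : Polynomial ℝ) = (X + 1) - (n : Polynomial ℝ) := by
      have h6 : (C ((n : ℝ) - 1) : Polynomial ℝ) = (n : Polynomial ℝ) - 1 := by
        rw [map_sub, Polynomial.C_1, Polynomial.C_eq_natCast]
      rw [h6]; ring
    rw [h5, map_sub, map_natCast, ← hl]
  exact hinj (by rw [hdet1, hdet2, ← hrhs])



end MatrixAux

section GroupAux
variable {G : Type*} [Group G]

lemma commute_of_commute_pow {p : ℕ} (hp : p.Prime) {y w : G}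
    (hyp : y ^ p ∈ Subgroup.center G) {i : ℕ} (hi : 0 < i) (hip : i < p)
    (h : Commute w (y ^ i)) : Commute w y := by
  have hcp : Commute w (y ^ p) := Subgroup.mem_center_iff.mp hyp w
  have hnd : ¬ p ∣ i := fun hd => absurd (Nat.le_of_dvd hi hd) (not_le.mpr hip)
  have hco : Nat.gcd i p = 1 := Nat.Coprime.symm ((Nat.Prime.coprime_iff_not_dvd hp).mpr hnd)
  obtain ⟨u, v, huv⟩ : ∃ u v : ℤ, (i : ℤ) * u + (p : ℤ) * v = 1 := by
    refine ⟨Int.gcdA i p, Int.gcdB i p, ?_⟩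
    have := Int.gcd_eq_gcd_ab (i : ℤ) (p : ℤ)
    rw [Int.gcd_natCast_natCast, hco] at this
    exact_mod_cast this.symm
  have hy : ((y ^ i) ^ u) * ((y ^ p) ^ v) = y := by
    rw [← zpow_natCast y i, ← zpow_natCast y p, ← zpow_mul, ← zpow_mul, ← zpow_add, huv, zpow_one]
  exact hy ▸ (h.zpow_right u).mul_right (hcp.zpow_right v)

/-- The elements `y, x, x*y, x*y^2, …` whose centralizers are pairwise distinct. -/
def BSelt (x y : G) : ℕ → G
  | 0 => y
  | (i + 1) => x * y ^ i

lemma bs_key {p : ℕ} (hp : p.Prime) {x y : G} (hyp : y ^ p ∈ Subgroup.center G)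
    (hxy : ¬ Commute x y) :
    ∀ i j, i < p + 1 → j < p + 1 → i ≠ j → ¬ Commute (BSelt x y i) (BSelt x y j) := by
  have main : ∀ k, k < p → ¬ Commute y (x * y ^ k) := by
    intro k _ h
    have h2 : Commute y ((x * y ^ k) * (y ^ k)⁻¹) :=
      h.mul_right ((Commute.refl y).pow_right k).inv_right
    rw [mul_inv_cancel_right] at h2
    exact hxy h2.symm
  have main2 : ∀ k l, k < l → l < p → ¬ Commute (x * y ^ k) (x * y ^ l) := by
    intro k l hkl hlp h
    have h2 : Commute (x * y ^ k) ((x * y ^ k)⁻¹ * (x * y ^ l)) :=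
      ((Commute.refl (x * y ^ k)).inv_right).mul_right h
    have h3 : (x * y ^ k)⁻¹ * (x * y ^ l) = y ^ (l - k) := by
      rw [mul_inv_rev, mul_assoc, inv_mul_cancel_left, ← inv_mul_cancel_left (y ^ k) (y ^ (l - k))]
      congr 1
      rw [← pow_add, Nat.add_sub_cancel' hkl.le]
    rw [h3] at h2
    have h4 : Commute (x * y ^ k) y :=
      commute_of_commute_pow hp hyp (Nat.sub_pos_of_lt hkl) (by omega) h2
    have h5 : Commute ((x * y ^ k) * (y ^ k)⁻¹) y :=
      h4.mul_left ((Commute.refl y).pow_left k).inv_left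
    rw [mul_inv_cancel_right] at h5
    exact hxy h5
  rintro (_ | i) (_ | j) hi hj hne h
  · exact hne rfl
  · exact main j (by omega) h
  · exact main i (by omega) h.symm
  · rcases Nat.lt_trichotomy i j with hij | hij | hij
    · exact main2 i j hij (by omega) h
    · exact hne (by omega)
    · exact main2 j i hij (by omega) h.symm

lemma card_mul_card_le_card_mul_card_inf [Fintype G] (H K : Subgroup G) :
    Nat.card H * Nat.card K ≤ Nat.card G * Nat.card (H ⊓ K : Subgroup G) := by
  classical
  letI : Fintype (H × K) := Fintype.ofFinite _
  have h1 : Nat.card (H × K) = Nat.card H * Nat.card K := Nat.card_prod _ _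
  rw [← h1, Nat.card_eq_fintype_card, Nat.card_eq_fintype_card (α := G)]
  set m : H × K → G := fun q => (q.1 : G) * q.2 with hm
  have key : ∀ gv : G, (Finset.univ.filter (fun q : H × K => m q = gv)).card ≤
      Nat.card (H ⊓ K : Subgroup G) := by
    intro gv
    by_cases hne : ∃ q : H × K, m q = gv
    · obtain ⟨q0, hq0⟩ := hne
      have hcard : Nat.card (H ⊓ K : Subgroup G) =
          (Finset.univ.filter (fun u : G => u ∈ H ⊓ K)).card := by
        rw [Nat.card_eq_fintype_card]
        exact Fintype.card_subtype _
      rw [hcard]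
      have hmem : ∀ q : H × K, m q = gv → ((q0.1 : G)⁻¹ * q.1) ∈ H ⊓ K := by
        intro q hq
        refine ⟨H.mul_mem (H.inv_mem q0.1.2) q.1.2, ?_⟩
        have hmm : (q.1 : G) * q.2 = (q0.1 : G) * q0.2 := by
          have := hq.trans hq0.symm
          simpa [hm] using this
        have h2 : (q0.1 : G)⁻¹ * q.1 = (q0.2 : G) * (q.2 : G)⁻¹ := by
          have h6 : (q.1 : G) = (q0.1 : G) * (q0.2 : G) * (q.2 : G)⁻¹ := by
            rw [eq_mul_inv_iff_mul_eq]; exact hmm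
          rw [h6]; group
        rw [h2]
        exact K.mul_mem q0.2.2 (K.inv_mem q.2.2)
      refine Finset.card_le_card_of_injOn (fun q => (q0.1 : G)⁻¹ * q.1) ?_ ?_
      · intro q hq
        simp only [Finset.coe_filter, Finset.mem_coe, Set.mem_setOf_eq, Finset.mem_filter, Finset.mem_univ, true_and] at hq ⊢
        exact hmem q hq
      · intro q hq q' hq' heq
        simp only [Finset.mem_coe, Finset.mem_filter, Finset.mem_univ, true_and] at hq hq'
        have h3 : (q.1 : G) = q'.1 := mul_left_cancel heq
        have h4 : (q.2 : G) = q'.2 := by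
          have h5 : (q.1 : G) * q.2 = (q'.1 : G) * q'.2 := by
            have := hq.trans hq'.symm
            simpa [hm] using this
          rw [h3] at h5
          exact mul_left_cancel h5
        exact Prod.ext (Subtype.ext h3) (Subtype.ext h4)
    · push_neg at hne
      have h7 : (Finset.univ.filter (fun q : H × K => m q = gv)) = ∅ :=
        Finset.filter_eq_empty_iff.mpr (fun {q} _ => hne q)
      simp [h7]
  calc Fintype.card (H × K)
      = ∑ gv : G, (Finset.univ.filter (fun q : H × K => m q = gv)).card :=
        Finset.card_eq_sum_card_fiberwise (fun q _ => Finset.mem_univ (m q))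
    _ ≤ ∑ _gv : G, Nat.card (H ⊓ K : Subgroup G) := Finset.sum_le_sum (fun gv _ => key gv)
    _ = Fintype.card G * Nat.card (H ⊓ K : Subgroup G) := by
        rw [Finset.sum_const, Finset.card_univ, smul_eq_mul]

lemma ppow_step {p a b : ℕ} (hp : p.Prime) (ha : ∃ s, a = p ^ s) (hb : ∃ t, b = p ^ t)
    (hab : a < b) : p * a ≤ b := by
  obtain ⟨s, rfl⟩ := ha
  obtain ⟨t, rfl⟩ := hb
  have hst : s < t := (pow_lt_pow_iff_right₀ hp.one_lt).mp hab
  calc p * p ^ s = p ^ (s + 1) := by ring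
  _ ≤ p ^ t := Nat.pow_le_pow_right hp.pos (by omega)



set_option maxHeartbeats 1000000 in
theorem bs_structure {p : ℕ} {G : Type*} [Group G] [Fintype G] (hp : p.Prime) (hpgroup : IsPGroup p G)
    (hna : ∃ a b : G, a * b ≠ b * a)
    (hcent : Nat.card (Set.range fun x : G => Subgroup.centralizer ({x} : Set G)) = p + 2) :
    ∃ D : ℕ → Subgroup G,
      (∀ i, i < p + 1 → Subgroup.center G ≤ D i) ∧
      (∀ w : G, w ∉ Subgroup.center G → ∃ i, i < p + 1 ∧ w ∈ D i) ∧
      (∀ w : G, w ∉ Subgroup.center G → ∀ i, i < p + 1 → w ∈ D i →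
        Subgroup.centralizer {w} = D i) ∧
      (∀ i j, i < p + 1 → j < p + 1 → i ≠ j → D i ≠ D j) ∧
      (∀ i, i < p + 1 → Nat.card (D i) = p * Nat.card (Subgroup.center G)) ∧
      Nat.card G = p ^ 2 * Nat.card (Subgroup.center G) := by
  classical
  haveI : Fact p.Prime := ⟨hp⟩
  set Z := Subgroup.center G with hZdef
  set z := Nat.card Z with hzdef
  set g := Nat.card G with hgdef
  obtain ⟨a0, b0, hab⟩ := hna
  have hb0 : b0 ∉ Z := fun h => hab (Subgroup.mem_center_iff.mp h a0)
  -- find y : noncentral with y^p central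
  have hQp : IsPGroup p (G ⧸ Z) := hpgroup.to_quotient Z
  haveI hQnt : Nontrivial (G ⧸ Z) :=
    ⟨⟨(b0 : G ⧸ Z), 1, fun h => hb0 ((QuotientGroup.eq_one_iff b0).mp h)⟩⟩
  obtain ⟨nq, hnq⟩ := IsPGroup.iff_card.mp hQp
  have hpdvd : p ∣ Nat.card (G ⧸ Z) := by
    rw [hnq]
    refine dvd_pow_self p ?_
    intro h0
    rw [h0, pow_zero] at hnq
    exact (Finite.one_lt_card_iff_nontrivial.mpr hQnt).ne' hnq
  obtain ⟨q, hq⟩ := exists_prime_orderOf_dvd_card' p hpdvd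
  obtain ⟨y, hy⟩ := QuotientGroup.mk_surjective q
  have hyZ : y ∉ Z := by
    intro h
    have h1 : q = 1 := by rw [← hy]; exact (QuotientGroup.eq_one_iff y).mpr h
    rw [h1, orderOf_one] at hq
    exact hp.one_lt.ne' hq.symm
  have hyp : y ^ p ∈ Z := by
    have h1 : (QuotientGroup.mk (y ^ p) : G ⧸ Z) = 1 := by
      have : (QuotientGroup.mk y : G ⧸ Z) ^ p = 1 := by
        rw [hy, ← hq]; exact pow_orderOf_eq_one q
      simpa using this
    exact (QuotientGroup.eq_one_iff _).mp h1
  obtain ⟨x, hxy⟩ : ∃ x : G, ¬ Commute x y := by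
    by_contra h
    push_neg at h
    exact hyZ (Subgroup.mem_center_iff.mpr h)
  -- the list of centralizers
  set D : ℕ → Subgroup G := fun i => Subgroup.centralizer {BSelt x y i} with hDdef
  have hkeyC := bs_key hp hyp hxy
  have hself : ∀ i, BSelt x y i ∈ D i :=
    fun i => Subgroup.mem_centralizer_singleton_iff.mpr rfl
  have hDinj : ∀ i j, i < p + 1 → j < p + 1 → i ≠ j → D i ≠ D j := by
    intro i j hi hj hne hEq
    have h1 : BSelt x y i ∈ D j := hEq ▸ hself i
    exact hkeyC i j hi hj hne (Subgroup.mem_centralizer_singleton_iff.mp h1)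
  have hother : ∀ i, i < p + 1 → ∃ j, j < p + 1 ∧ j ≠ i := by
    intro i hi
    rcases Nat.eq_zero_or_pos i with rfl | hpos
    · exact ⟨1, by have := hp.two_le; omega, by omega⟩
    · exact ⟨0, by omega, by omega⟩
  have hnotc : ∀ i, i < p + 1 → BSelt x y i ∉ Z := by
    intro i hi h
    obtain ⟨j, hj, hji⟩ := hother i hi
    exact hkeyC j i hj hi hji (Subgroup.mem_center_iff.mp h (BSelt x y j))
  have hDnotTop : ∀ i, i < p + 1 → D i ≠ ⊤ := by
    intro i hi hEq
    obtain ⟨j, hj, hji⟩ := hother i hi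
    have h1 : BSelt x y j ∈ D i := hEq ▸ Subgroup.mem_top _
    exact hkeyC j i hj hi hji (Subgroup.mem_centralizer_singleton_iff.mp h1)
  -- identify the set of all centralizers
  set R := Set.range (fun w : G => Subgroup.centralizer ({w} : Set G)) with hRdef
  have hc1 : Subgroup.centralizer ({(1 : G)} : Set G) = ⊤ := by
    ext u; simp [Subgroup.mem_centralizer_singleton_iff]
  set T : Set (Subgroup G) := insert ⊤ ((fun i => D i) '' (Set.Iio (p + 1))) with hTdef
  have hTsub : T ⊆ R := by
    intro S hS
    rcases hS with rfl | ⟨i, _, rfl⟩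
    · exact ⟨1, hc1⟩
    · exact ⟨BSelt x y i, rfl⟩
  have hIio : (Set.Iio (p + 1) : Set ℕ).ncard = p + 1 := by
    rw [← Finset.coe_range, Set.ncard_coe_finset, Finset.card_range]
  have hinjOn : Set.InjOn (fun i => D i) (Set.Iio (p + 1)) := by
    intro i hi j hj hEq
    by_contra hne
    exact hDinj i j hi hj hne hEq
  have himg_card : ((fun i => D i) '' (Set.Iio (p + 1))).ncard = p + 1 := by
    rw [Set.ncard_image_of_injOn hinjOn, hIio]
  have himg_fin : ((fun i => D i) '' (Set.Iio (p + 1))).Finite :=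
    (Set.finite_Iio _).image _
  have htop_not : ⊤ ∉ ((fun i => D i) '' (Set.Iio (p + 1))) := by
    rintro ⟨i, hi, hEq⟩
    exact hDnotTop i hi hEq
  have hTcard : T.ncard = p + 2 := by
    rw [hTdef, Set.ncard_insert_of_notMem htop_not himg_fin, himg_card]
  have hRcard : R.ncard = p + 2 := by rw [← Nat.card_coe_set_eq]; exact hcent
  have hTR : T = R :=
    Set.eq_of_subset_of_ncard_le hTsub (by rw [hTcard, hRcard]) (Set.finite_range _)
  have hclass : ∀ w : G, w ∉ Z → ∃ i, i < p + 1 ∧ Subgroup.centralizer {w} = D i := by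
    intro w hw
    have h1 : Subgroup.centralizer ({w} : Set G) ∈ T := hTR ▸ Set.mem_range_self w
    rcases h1 with h | ⟨i, hi, hEq⟩
    · exfalso
      refine hw (Subgroup.mem_center_iff.mpr (fun u => ?_))
      have h2 : u ∈ Subgroup.centralizer ({w} : Set G) := h ▸ Subgroup.mem_top u
      exact Subgroup.mem_centralizer_singleton_iff.mp h2
    · exact ⟨i, hi, hEq.symm⟩
  have hmemD : ∀ w : G, w ∉ Z → ∀ i, i < p + 1 → w ∈ D i → ∀ j, j < p + 1 → w ∈ D j →
      i = j := by
    intro w hw i hi hwi j hj hwj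
    by_contra hne
    obtain ⟨k, hk, hCk⟩ := hclass w hw
    have hmm : ∀ l, l < p + 1 → w ∈ D l → Commute (BSelt x y l) (BSelt x y k) := by
      intro l hl hwl
      have h1 : BSelt x y l ∈ Subgroup.centralizer {w} :=
        Subgroup.mem_centralizer_singleton_iff.mpr
          (Subgroup.mem_centralizer_singleton_iff.mp hwl).symm
      rw [hCk] at h1
      exact Subgroup.mem_centralizer_singleton_iff.mp h1
    rcases eq_or_ne i k with rfl | hik
    · exact hkeyC j i hj hi (fun h => hne h.symm) (hmm j hj hwj)
    · exact hkeyC i k hi hk hik (hmm i hi hwi)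
  have hcw : ∀ w : G, w ∉ Z → ∀ i, i < p + 1 → w ∈ D i →
      Subgroup.centralizer {w} = D i := by
    intro w hw i hi hwi
    obtain ⟨k, hk, hCk⟩ := hclass w hw
    have hwk : w ∈ D k := by
      rw [← hCk]; exact Subgroup.mem_centralizer_singleton_iff.mpr rfl
    rw [hCk, hmemD w hw k hk hwk i hi hwi]
  have hZD : ∀ i, Z ≤ D i := fun i => Subgroup.center_le_centralizer _
  -- cardinalities
  set c : ℕ → ℕ := fun i => Nat.card (D i) with hcdef
  have hppow : ∀ H : Subgroup G, ∃ s, Nat.card H = p ^ s := fun H =>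
    IsPGroup.exists_card_eq (hpgroup.to_subgroup H)
  have hgpow : ∃ s, g = p ^ s := IsPGroup.exists_card_eq hpgroup
  have hzpos : 0 < z := Nat.card_pos
  have hgpos : 0 < g := Nat.card_pos
  have hzc : ∀ i, i < p + 1 → z < c i := by
    intro i hi
    have hle : Nat.card Z ≤ Nat.card (D i) := Subgroup.card_le_of_le (hZD i)
    rcases lt_or_eq_of_le hle with h | h
    · exact h
    · exfalso
      have h1 : Z = D i := Subgroup.eq_of_le_of_card_ge (hZD i) h.ge
      exact hnotc i hi (h1 ▸ hself i)
  have hcg : ∀ i, i < p + 1 → c i < g := by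
    intro i hi
    have hle : Nat.card (D i) ≤ Nat.card G := by
      rw [← Subgroup.card_top (G := G)]
      exact Subgroup.card_le_of_le le_top
    rcases lt_or_eq_of_le hle with h | h
    · exact h
    · exfalso
      refine hDnotTop i hi (Subgroup.eq_of_le_of_card_ge le_top ?_)
      rw [Subgroup.card_top (G := G)]
      exact h.ge
  have hpzc : ∀ i, i < p + 1 → p * z ≤ c i :=
    fun i hi => ppow_step hp (hppow Z) (hppow (D i)) (hzc i hi)
  have hpcg : ∀ i, i < p + 1 → p * c i ≤ g :=
    fun i hi => ppow_step hp (hppow (D i)) hgpow (hcg i hi)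
  have hinfZ : ∀ i j, i < p + 1 → j < p + 1 → i ≠ j → D i ⊓ D j ≤ Z := by
    intro i j hi hj hne w hw
    by_contra hwZ
    exact hne (hmemD w hwZ i hi hw.1 j hj hw.2)
  have hprod : ∀ i j, i < p + 1 → j < p + 1 → i ≠ j → c i * c j ≤ g * z := by
    intro i j hi hj hne
    calc c i * c j ≤ Nat.card G * Nat.card (D i ⊓ D j : Subgroup G) :=
        card_mul_card_le_card_mul_card_inf (D i) (D j)
    _ ≤ g * z := Nat.mul_le_mul_left _ (Subgroup.card_le_of_le (hinfZ i j hi hj hne))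
  -- counting : the D i \ Z partition G \ Z
  have hfib_eq : ∀ i, i < p + 1 → ((D i : Set G) \ (Z : Set G)).ncard = c i - z := by
    intro i hi
    rw [Set.ncard_diff (SetLike.coe_subset_coe.mpr (hZD i))]
    congr 1 <;> rw [← Nat.card_coe_set_eq] <;> rfl
  set Sfin : ℕ → Finset G := fun i => Set.toFinset ((D i : Set G) \ (Z : Set G)) with hSfin
  have hdisj : ∀ i ∈ Finset.range (p + 1), ∀ j ∈ Finset.range (p + 1), i ≠ j →
      Disjoint (Sfin i) (Sfin j) := by
    intro i hi j hj hne
    rw [Finset.disjoint_left]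
    intro w hwi hwj
    rw [hSfin] at hwi hwj
    simp only [Set.mem_toFinset, Set.mem_diff, SetLike.mem_coe] at hwi hwj
    exact hne (hmemD w (fun h => hwi.2 h) i (Finset.mem_range.mp hi) hwi.1 j
      (Finset.mem_range.mp hj) hwj.1)
  have hunion : (Finset.range (p + 1)).biUnion Sfin = Set.toFinset ((Z : Set G)ᶜ) := by
    ext w
    simp only [Finset.mem_biUnion, Finset.mem_range, hSfin, Set.mem_toFinset, Set.mem_diff,
      Set.mem_compl_iff, SetLike.mem_coe]
    constructor
    · rintro ⟨i, hi, _, hwZ⟩; exact hwZ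
    · intro hw
      obtain ⟨i, hi, hCi⟩ := hclass w hw
      refine ⟨i, hi, ?_, hw⟩
      rw [← hCi]
      exact Subgroup.mem_centralizer_singleton_iff.mpr rfl
  have hsum1 : ∑ i ∈ Finset.range (p + 1), (Sfin i).card = (Set.toFinset ((Z : Set G)ᶜ)).card := by
    rw [← hunion, Finset.card_biUnion hdisj]
  have hSc : ∀ i, i < p + 1 → (Sfin i).card = c i - z := by
    intro i hi
    rw [hSfin, ← Set.ncard_eq_toFinset_card']
    exact hfib_eq i hi
  have hzg : z ≤ g := by
    rw [hzdef, hgdef, ← Subgroup.card_top (G := G)]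
    exact Subgroup.card_le_of_le le_top
  have hcompl : (Set.toFinset ((Z : Set G)ᶜ)).card = g - z := by
    rw [← Set.ncard_eq_toFinset_card', Set.compl_eq_univ_diff, Set.ncard_diff (Set.subset_univ _),
      Set.ncard_univ]
    have h20 : ((Z : Set G)).ncard = z := by rw [← Nat.card_coe_set_eq]; rfl
    rw [h20]
  have hsum : ∑ i ∈ Finset.range (p + 1), c i = g + p * z := by
    have h8 : ∑ i ∈ Finset.range (p + 1), (c i - z) = g - z := by
      rw [← hcompl, ← hsum1]
      exact Finset.sum_congr rfl (fun i hi => (hSc i (Finset.mem_range.mp hi)).symm)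
    have h9 : ∀ i ∈ Finset.range (p + 1), c i = (c i - z) + z :=
      fun i hi => (Nat.sub_add_cancel (hzc i (Finset.mem_range.mp hi)).le).symm
    rw [Finset.sum_congr rfl h9, Finset.sum_add_distrib, h8, Finset.sum_const,
      Finset.card_range, smul_eq_mul]
    have h21 : (p + 1) * z = p * z + z := by ring
    omega
  -- all the c i are equal to p * z
  have hcpz : ∀ i, i < p + 1 → c i = p * z := by
    intro i hi
    refine le_antisymm ?_ (hpzc i hi)
    by_contra hgt
    push_neg at hgt
    have hppz : p * (p * z) ≤ c i := by
      obtain ⟨a, ha⟩ := hppow Z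
      refine ppow_step hp ⟨a + 1, by rw [← hzdef] at ha; rw [ha]; ring⟩ (hppow (D i)) hgt
    have hp2z : p ^ 2 * z ≤ c i := by
      calc p ^ 2 * z = p * (p * z) := by ring
      _ ≤ c i := hppz
    have hS2 : ∑ j ∈ (Finset.range (p + 1)).erase i, (p ^ 2 * z) * c j ≤ p * (g * z) := by
      calc ∑ j ∈ (Finset.range (p + 1)).erase i, (p ^ 2 * z) * c j
          ≤ ∑ _j ∈ (Finset.range (p + 1)).erase i, g * z := by
            refine Finset.sum_le_sum (fun j hj => ?_)
            have hj' := Finset.mem_erase.mp hj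
            calc (p ^ 2 * z) * c j ≤ c i * c j := Nat.mul_le_mul_right _ hp2z
            _ ≤ g * z := hprod i j hi (Finset.mem_range.mp hj'.2) (Ne.symm hj'.1)
      _ = p * (g * z) := by
            rw [Finset.sum_const, smul_eq_mul, Finset.card_erase_of_mem (Finset.mem_range.mpr hi),
              Finset.card_range]
            simp
    have hS3 : (p ^ 2 * z) * c i ≤ (p * z) * g := by
      calc (p ^ 2 * z) * c i = (p * z) * (p * c i) := by ring
      _ ≤ (p * z) * g := Nat.mul_le_mul_left _ (hpcg i hi)
    have hS4 : (p ^ 2 * z) * (g + p * z) ≤ 2 * (p * z * g) := by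
      calc (p ^ 2 * z) * (g + p * z) = (p ^ 2 * z) * ∑ j ∈ Finset.range (p + 1), c j := by
            rw [hsum]
      _ = ∑ j ∈ Finset.range (p + 1), (p ^ 2 * z) * c j := Finset.mul_sum _ _ _
      _ = (p ^ 2 * z) * c i + ∑ j ∈ (Finset.range (p + 1)).erase i, (p ^ 2 * z) * c j :=
            (Finset.add_sum_erase _ _ (Finset.mem_range.mpr hi)).symm
      _ ≤ (p * z) * g + p * (g * z) := add_le_add hS3 hS2
      _ = 2 * (p * z * g) := by ring
    have h10 : 2 * (p * z * g) ≤ (p ^ 2 * z) * g := by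
      have h11 : 2 * p ≤ p * p := Nat.mul_le_mul_right p hp.two_le
      calc 2 * (p * z * g) = (2 * p) * (z * g) := by ring
      _ ≤ (p * p) * (z * g) := Nat.mul_le_mul_right _ h11
      _ = (p ^ 2 * z) * g := by ring
    have h12 : 0 < (p ^ 2 * z) * (p * z) :=
      Nat.mul_pos (Nat.mul_pos (pow_pos hp.pos 2) hzpos) (Nat.mul_pos hp.pos hzpos)
    have h13 : (p ^ 2 * z) * (g + p * z) = (p ^ 2 * z) * g + (p ^ 2 * z) * (p * z) := by ring
    omega
  -- total cardinality
  have hgz : g = p ^ 2 * z := by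
    have h14 : ∑ i ∈ Finset.range (p + 1), c i = (p + 1) * (p * z) := by
      rw [Finset.sum_congr rfl (fun i hi => hcpz i (Finset.mem_range.mp hi)),
        Finset.sum_const, Finset.card_range, smul_eq_mul]
    have h15 : (p + 1) * (p * z) = p * (p * z) + p * z := by ring
    have h16 : p ^ 2 * z = p * (p * z) := by ring
    omega
  exact ⟨D, fun i _ => hZD i, fun w hw => by
      obtain ⟨i, hi, hCi⟩ := hclass w hw
      exact ⟨i, hi, by rw [← hCi]; exact Subgroup.mem_centralizer_singleton_iff.mpr rfl⟩,
    hcw, hDinj, hcpz, hgz⟩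


end GroupAux

theorem commuting_integral_of_p_add_two_centralizer_p_group
    (p : ℕ) (hp : p.Prime) (G : Type*) [Group G] [Fintype G]
    (hpgroup : IsPGroup p G)
    (hna : ∃ a b : G, a * b ≠ b * a)
    (hcent : Nat.card (Set.range fun x : G => Subgroup.centralizer ({x} : Set G)) = p + 2) :
    commCharpoly G =
        (X + 1) ^ ((p ^ 2 - 1) * Nat.card (Subgroup.center G) - p - 1) *
          (X - C (((p : ℝ) - 1) * Nat.card (Subgroup.center G) - 1)) ^ (p + 1) ∧
      ∀ μ : ℝ, (commCharpoly G).IsRoot μ → ∃ k : ℤ, μ = (k : ℝ) := by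
  classical
  haveI : Fact p.Prime := ⟨hp⟩
  obtain ⟨D, hZD, hcover, hcw, hDinj, hcpz, hgz⟩ := bs_structure hp hpgroup hna hcent
  set z := Nat.card (Subgroup.center G) with hzdef
  have hzpos : 0 < z := Nat.card_pos
  -- the classification function on non-central elements
  have hsel : ∀ v : {w : G // w ∉ Subgroup.center G}, ∃ i : Fin (p + 1), (v : G) ∈ D (i : ℕ) := by
    intro v
    obtain ⟨i, hi, hvi⟩ := hcover v.1 v.2
    exact ⟨⟨i, hi⟩, hvi⟩
  set cf : {w : G // w ∉ Subgroup.center G} → Fin (p + 1) := fun v => (hsel v).choose with hcf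
  have hcfmem : ∀ v : {w : G // w ∉ Subgroup.center G}, (v : G) ∈ D ((cf v : Fin (p + 1)) : ℕ) := fun v => (hsel v).choose_spec
  have hmemD : ∀ w : G, w ∉ Subgroup.center G → ∀ i j : Fin (p + 1),
      w ∈ D (i : ℕ) → w ∈ D (j : ℕ) → i = j := by
    intro w hw i j hwi hwj
    have h1 := hcw w hw i i.isLt hwi
    have h2 := hcw w hw j j.isLt hwj
    by_contra hne
    exact hDinj i j i.isLt j.isLt (fun h => hne (Fin.ext h)) (h1.symm.trans h2)
  have hcfeq : ∀ v : {w : G // w ∉ Subgroup.center G}, ∀ i : Fin (p + 1), (v : G) ∈ D (i : ℕ) → cf v = i :=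
    fun v i h => hmemD v.1 v.2 _ _ (hcfmem v) h
  have hCv : ∀ v : {w : G // w ∉ Subgroup.center G}, Subgroup.centralizer {(v : G)} = D ((cf v : Fin (p + 1)) : ℕ) :=
    fun v => hcw v.1 v.2 _ (Fin.isLt _) (hcfmem v)
  have hAdj : ∀ v w : {w : G // w ∉ Subgroup.center G}, (commutingGraph G).Adj v w ↔ (v ≠ w ∧ cf v = cf w) := by
    intro v w
    constructor
    · rintro ⟨hne, hcomm⟩
      refine ⟨hne, ?_⟩
      have h1 : (w : G) ∈ Subgroup.centralizer {(v : G)} :=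
        Subgroup.mem_centralizer_singleton_iff.mpr hcomm.symm
      rw [hCv v] at h1
      exact (hcfeq w _ h1).symm
    · rintro ⟨hne, heq⟩
      refine ⟨hne, ?_⟩
      have h1 : (w : G) ∈ D ((cf v : Fin (p + 1)) : ℕ) := by
        rw [heq]; exact hcfmem w
      rw [← hCv v] at h1
      exact (Subgroup.mem_centralizer_singleton_iff.mp h1).symm
  -- fibre sizes
  set n := (p - 1) * z with hndef
  have hn : 1 ≤ n := by
    have := hp.two_le
    have : 1 ≤ p - 1 := by omega
    calc 1 = 1 * 1 := by ring
    _ ≤ (p - 1) * z := Nat.mul_le_mul this hzpos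
  have hfibcard : ∀ i : Fin (p + 1),
      Fintype.card {v : {w : G // w ∉ Subgroup.center G} // cf v = i} = n := by
    intro i
    have hequiv : {v : {w : G // w ∉ Subgroup.center G} // cf v = i} ≃
        ((D (i : ℕ) : Set G) \ (Subgroup.center G : Set G) : Set G) :=
      { toFun := fun q => ⟨(q.1 : G), ⟨by have h := hcfmem q.1; rw [q.2] at h; exact h, q.1.2⟩⟩
        invFun := fun r => ⟨⟨r.1, r.2.2⟩, hcfeq ⟨r.1, r.2.2⟩ i r.2.1⟩
        left_inv := fun q => by ext; rfl
        right_inv := fun r => by ext; rfl }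
    rw [← Nat.card_eq_fintype_card, Nat.card_congr hequiv]
    have h1 : ((D (i : ℕ) : Set G) \ (Subgroup.center G : Set G)).ncard = p * z - z := by
      rw [Set.ncard_diff (SetLike.coe_subset_coe.mpr (hZD i i.isLt))]
      have h2 : ((D (i : ℕ) : Set G)).ncard = p * z := by
        rw [← Nat.card_coe_set_eq]
        exact hcpz i i.isLt
      have h3 : ((Subgroup.center G : Set G)).ncard = z := by
        rw [← Nat.card_coe_set_eq]; rfl
      rw [h2, h3]
    rw [Nat.card_coe_set_eq, h1, hndef]
    have := Nat.sub_mul p 1 z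
    omega
  -- the adjacency matrix has the required shape
  have hAmat : ∀ v w : {w : G // w ∉ Subgroup.center G}, ((commutingGraph G).adjMatrix ℝ) v w =
      if v ≠ w ∧ cf v = cf w then 1 else 0 := by
    intro v w
    rw [SimpleGraph.adjMatrix_apply]
    exact if_congr (hAdj v w) rfl rfl
  have hcp := charpoly_fiber_matrix cf n hn hfibcard ((commutingGraph G).adjMatrix ℝ) hAmat
  -- cardinalities
  have hVcard : Fintype.card {w : G // w ∉ Subgroup.center G} = (p ^ 2 - 1) * z := by
    rw [Fintype.card_subtype_compl]
    have h1 : Fintype.card {x : G // x ∈ Subgroup.center G} = z :=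
      Nat.card_eq_fintype_card.symm
    have h2 : Fintype.card G = p ^ 2 * z := by rw [← Nat.card_eq_fintype_card]; exact hgz
    rw [h1, h2]
    have := Nat.sub_mul (p ^ 2) 1 z
    omega
  have hKcard : Fintype.card (Fin (p + 1)) = p + 1 := Fintype.card_fin _
  have hfac : commCharpoly G =
      (X + 1) ^ ((p ^ 2 - 1) * z - p - 1) *
        (X - C (((p : ℝ) - 1) * z - 1)) ^ (p + 1) := by
    have h0 : commCharpoly G = ((commutingGraph G).adjMatrix ℝ).charpoly := rfl
    rw [h0, hcp, hVcard, hKcard]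
    have hexp : (p ^ 2 - 1) * z - (p + 1) = (p ^ 2 - 1) * z - p - 1 := by omega
    have hcoef : ((n : ℝ) - 1) = ((p : ℝ) - 1) * z - 1 := by
      rw [hndef, Nat.cast_mul, Nat.cast_sub hp.one_le, Nat.cast_one]
    rw [hexp, hcoef]
  refine ⟨hfac, ?_⟩
  intro μ hroot
  rw [hfac] at hroot
  have heval : (μ + 1) ^ ((p ^ 2 - 1) * z - p - 1) * (μ - (((p : ℝ) - 1) * z - 1)) ^ (p + 1)
      = 0 := by
    simpa [Polynomial.IsRoot, Polynomial.eval_mul, Polynomial.eval_pow] using hroot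
  rcases mul_eq_zero.mp heval with h | h
  · have h1 : μ + 1 = 0 := (pow_eq_zero_iff'.mp h).1
    exact ⟨-1, by push_cast; linarith⟩
  · have h1 : μ - (((p : ℝ) - 1) * z - 1) = 0 := (pow_eq_zero_iff'.mp h).1
    refine ⟨((p : ℤ) - 1) * z - 1, ?_⟩
    push_cast
    linarith
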